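/- There exists a bounded pseudoconvex domain Ω ⊂ ℂ² admitting infinitely many distinct hermitian ellipsoids (centered at 0) of maximal inscribed volume; namely Ω = {(x,y) : |xy| < 1, |x| < 3, |y| < 3}, in which E_p = {(x,y) : (p²/2)|x|² + (p⁻²/2)|y|² < 1} is maximal for every p ∈ (1/2, 2). -/

import Mathlib

open Complex MeasureTheory Bornology

/-- A positive definite hermitian form on `ℂⁿ` (linear in the first argument,
conjugate-linear in the second). -/
structure PosDefHermForm (n : ℕ) where
  form : (Fin n → ℂ) → (Fin n → ℂ) → ℂ
  add_left : ∀ z z' w, form (z + z') w = form z w + form z' w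
  smul_left : ∀ (a : ℂ) (z w : Fin n → ℂ), form (a • z) w = a * form z w
  conj_symm : ∀ z w, form z w = starRingEnd ℂ (form w z)
  posdef : ∀ z, z ≠ 0 → 0 < (form z z).re

/-- The hermitian ellipsoid `E_h = {z : h(z,z) < 1}`. -/
def PosDefHermForm.ball {n : ℕ} (h : PosDefHermForm n) : Set (Fin n → ℂ) :=
  {z | (h.form z z).re < 1}

/-- Plurisubharmonicity via the sub-mean-value inequality on complex lines
(the standard characterization for continuous functions). -/
def PlurisubharmonicOn {n : ℕ} (u : (Fin n → ℂ) → ℝ) (Ω : Set (Fin n → ℂ)) : Prop :=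
  ∀ (a b : Fin n → ℂ) (r : ℝ), 0 < r →
    (∀ lam : ℂ, ‖lam‖ ≤ r → a + lam • b ∈ Ω) →
    u a ≤ (2 * Real.pi)⁻¹ *
      ∫ t in (0:ℝ)..(2 * Real.pi), u (a + ((r : ℂ) * Complex.exp ((t : ℂ) * Complex.I)) • b)

/-- Pseudoconvexity: an open set admitting a continuous plurisubharmonic
exhaustion function. -/
def IsPseudoconvex {n : ℕ} (Ω : Set (Fin n → ℂ)) : Prop :=
  IsOpen Ω ∧ ∃ u : (Fin n → ℂ) → ℝ, ContinuousOn u Ω ∧ PlurisubharmonicOn u Ω ∧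
    ∀ c : ℝ, IsCompact {z | z ∈ Ω ∧ u z ≤ c}


/-- The bicylinder-type domain `Ω = {(x,y) : |xy| < 1, |x| < 3, |y| < 3}`. -/
def OmegaXY : Set (Fin 2 → ℂ) :=
  {z | ‖z 0 * z 1‖ < 1 ∧ ‖z 0‖ < 3 ∧ ‖z 1‖ < 3}

/-- The ellipsoid `E_p = {(x,y) : (p²/2)|x|² + (p⁻²/2)|y|² < 1}`. -/
def ellP (p : ℝ) : Set (Fin 2 → ℂ) :=
  {z | p^2/2 * Complex.normSq (z 0) + p⁻¹^2/2 * Complex.normSq (z 1) < 1}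

open intervalIntegral

noncomputable section

lemma int_exp_zero {c : ℂ} (hc : c ≠ 0) (h1 : Complex.exp (c * (2 * Real.pi)) = 1) :
    ∫ t in (0:ℝ)..(2 * Real.pi), Complex.exp (c * t) = 0 := by
  rw [integral_exp_mul_complex hc]
  push_cast
  rw [h1, mul_zero, Complex.exp_zero, sub_self, zero_div]

lemma exp_I_two_pi : Complex.exp (Complex.I * (2 * Real.pi)) = 1 := by
  rw [show Complex.I * (2 * (Real.pi:ℂ)) = 2 * Real.pi * Complex.I by ring,
    Complex.exp_two_pi_mul_I]

lemma int_exp1 : ∫ t in (0:ℝ)..(2 * Real.pi), Complex.exp (t * Complex.I) = 0 := by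
  have := int_exp_zero Complex.I_ne_zero exp_I_two_pi
  simpa [mul_comm] using this

lemma int_exp2 : ∫ t in (0:ℝ)..(2 * Real.pi), Complex.exp (t * Complex.I) ^ 2 = 0 := by
  have h1 : Complex.exp (2 * Complex.I * (2 * Real.pi)) = 1 := by
    rw [show (2:ℂ) * Complex.I * (2 * Real.pi) = 2 * Real.pi * Complex.I + 2 * Real.pi * Complex.I
      by ring, Complex.exp_add, Complex.exp_two_pi_mul_I, one_mul]
  have h2 : (2 * Complex.I : ℂ) ≠ 0 := by simp [Complex.I_ne_zero]
  have := int_exp_zero h2 h1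
  have heq : ∀ t : ℝ, Complex.exp (2 * Complex.I * t) = Complex.exp (t * Complex.I) ^ 2 := by
    intro t
    rw [show (2 : ℂ) * Complex.I * t = t * Complex.I + t * Complex.I by ring, Complex.exp_add,
      sq]
  rw [← this]
  exact integral_congr fun t _ => (heq t).symm

lemma int_exp_neg : ∫ t in (0:ℝ)..(2 * Real.pi), Complex.exp (-(t * Complex.I)) = 0 := by
  have h1 : Complex.exp (-Complex.I * (2 * Real.pi)) = 1 := by
    rw [show -Complex.I * (2 * Real.pi:ℂ) = -(2 * Real.pi * Complex.I) by ring,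
      Complex.exp_neg, Complex.exp_two_pi_mul_I, inv_one]
  have h2 : (-Complex.I : ℂ) ≠ 0 := by simp [Complex.I_ne_zero]
  have := int_exp_zero h2 h1
  simpa [neg_mul, mul_comm] using this

lemma cont_w (r : ℝ) : Continuous fun t : ℝ => (r : ℂ) * Complex.exp (t * Complex.I) :=
  continuous_const.mul ((Complex.continuous_ofReal.mul continuous_const).cexp)

/-- circle mean of a quadratic polynomial -/
lemma int_quad (c₀ c₁ c₂ : ℂ) (r : ℝ) :
    ∫ t in (0:ℝ)..(2 * Real.pi),
      (c₀ + c₁ * ((r:ℂ) * Complex.exp (t * Complex.I)) +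
        c₂ * ((r:ℂ) * Complex.exp (t * Complex.I)) ^ 2) = 2 * Real.pi * c₀ := by
  have hw := cont_w r
  have h0 : IntervalIntegrable (fun _ : ℝ => c₀) volume 0 (2 * Real.pi) :=
    intervalIntegrable_const
  have h1 : IntervalIntegrable (fun t : ℝ => c₁ * ((r:ℂ) * Complex.exp (t * Complex.I)))
      volume 0 (2 * Real.pi) := (continuous_const.mul hw).intervalIntegrable _ _
  have h2 : IntervalIntegrable (fun t : ℝ => c₂ * ((r:ℂ) * Complex.exp (t * Complex.I)) ^ 2)
      volume 0 (2 * Real.pi) := (continuous_const.mul (hw.pow 2)).intervalIntegrable _ _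
  rw [integral_add (h0.add h1) h2, integral_add h0 h1]
  have e1 : ∫ t in (0:ℝ)..(2 * Real.pi), c₁ * ((r:ℂ) * Complex.exp (t * Complex.I)) = 0 := by
    have : (fun t : ℝ => c₁ * ((r:ℂ) * Complex.exp (t * Complex.I)))
        = fun t : ℝ => (c₁ * r) * Complex.exp (t * Complex.I) := by funext t; ring
    rw [this, intervalIntegral.integral_const_mul, int_exp1, mul_zero]
  have e2 : ∫ t in (0:ℝ)..(2 * Real.pi), c₂ * ((r:ℂ) * Complex.exp (t * Complex.I)) ^ 2 = 0 := by
    have : (fun t : ℝ => c₂ * ((r:ℂ) * Complex.exp (t * Complex.I)) ^ 2)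
        = fun t : ℝ => (c₂ * r ^ 2) * Complex.exp (t * Complex.I) ^ 2 := by funext t; ring
    rw [this, intervalIntegral.integral_const_mul, int_exp2, mul_zero]
  rw [e1, e2, intervalIntegral.integral_const]
  rw [sub_zero, Complex.real_smul]
  push_cast
  ring

/-- exact circle mean of `normSq` along an affine line -/
lemma int_normSq (x y : ℂ) (r : ℝ) :
    ∫ t in (0:ℝ)..(2 * Real.pi),
      Complex.normSq (x + ((r:ℂ) * Complex.exp (t * Complex.I)) * y)
      = 2 * Real.pi * (Complex.normSq x + r ^ 2 * Complex.normSq y) := by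
  have hw := cont_w r
  have key : ∀ t : ℝ,
      Complex.normSq (x + ((r:ℂ) * Complex.exp (t * Complex.I)) * y)
      = (Complex.normSq x + r ^ 2 * Complex.normSq y)
        + 2 * ((x * (starRingEnd ℂ) y * r) * Complex.exp (-(t * Complex.I))).re := by
    intro t
    rw [Complex.normSq_add]
    have habs : Complex.normSq (((r:ℂ) * Complex.exp (t * Complex.I)) * y)
        = r ^ 2 * Complex.normSq y := by
      rw [map_mul, map_mul, Complex.normSq_eq_norm_sq (Complex.exp _),
        Complex.norm_exp_ofReal_mul_I, Complex.normSq_ofReal]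
      ring
    rw [habs]
    have hconj : x * (starRingEnd ℂ) (((r:ℂ) * Complex.exp (t * Complex.I)) * y)
        = (x * (starRingEnd ℂ) y * r) * Complex.exp (-(t * Complex.I)) := by
      rw [map_mul, map_mul, ← Complex.exp_conj]
      have h9 : (starRingEnd ℂ) ((t:ℂ) * Complex.I) = -(t * Complex.I) := by
        simp [map_mul, Complex.conj_I, Complex.conj_ofReal]
      rw [h9, Complex.conj_ofReal]
      ring
    rw [hconj]
  rw [integral_congr fun t _ => key t]
  have hcont : Continuous fun t : ℝ =>
      ((x * (starRingEnd ℂ) y * r) * Complex.exp (-(t * Complex.I))).re :=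
    Complex.continuous_re.comp (continuous_const.mul
      ((Complex.continuous_ofReal.mul continuous_const).neg.cexp))
  rw [integral_add intervalIntegrable_const
    ((continuous_const.fun_mul hcont).intervalIntegrable _ _), intervalIntegral.integral_const]
  have : ∫ t in (0:ℝ)..(2 * Real.pi),
      2 * ((x * (starRingEnd ℂ) y * r) * Complex.exp (-(t * Complex.I))).re = 0 := by
    rw [intervalIntegral.integral_const_mul]
    have : ∫ t in (0:ℝ)..(2 * Real.pi),
        ((x * (starRingEnd ℂ) y * r) * Complex.exp (-(t * Complex.I))).re
        = ((x * (starRingEnd ℂ) y * r) * ∫ t in (0:ℝ)..(2 * Real.pi),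
            Complex.exp (-(t * Complex.I))).re := by
      rw [← intervalIntegral.integral_const_mul]
      have hcf : Continuous fun t : ℝ =>
          (x * (starRingEnd ℂ) y * r) * Complex.exp (-(t * Complex.I)) :=
        continuous_const.mul ((Complex.continuous_ofReal.mul continuous_const).neg.cexp)
      have h8 := Complex.reCLM.intervalIntegral_comp_comm (μ := volume) (a := (0:ℝ))
        (b := 2 * Real.pi) (hcf.intervalIntegrable _ _)
      simpa using h8
    rw [this, int_exp_neg, mul_zero, Complex.zero_re, mul_zero]
  rw [this, add_zero]
  simp only [sub_zero, smul_eq_mul]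

lemma tangent {M m t : ℝ} (hm : m < M) (ht : t < M) :
    (M - m)⁻¹ + (t - m) * ((M - m) ^ 2)⁻¹ ≤ (M - t)⁻¹ := by
  have h1 : 0 < M - t := by linarith
  have h2 : 0 < M - m := by linarith
  have key : (M - t)⁻¹ - ((M - m)⁻¹ + (t - m) * ((M - m) ^ 2)⁻¹)
      = (t - m) ^ 2 * ((M - t) * (M - m) ^ 2)⁻¹ := by
    field_simp
    ring
  nlinarith [sq_nonneg (t - m), inv_pos.mpr (mul_pos h1 (pow_pos h2 2)),
    mul_nonneg (sq_nonneg (t - m)) (le_of_lt (inv_pos.mpr (mul_pos h1 (pow_pos h2 2))))]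

lemma avg_inv_ge {M : ℝ} (φ : ℝ → ℝ) (hφ : Continuous φ) (hlt : ∀ t, φ t < M)
    {m : ℝ} (hm : m < M)
    (hmean : 2 * Real.pi * m ≤ ∫ t in (0:ℝ)..(2 * Real.pi), φ t) :
    (M - m)⁻¹ ≤ (2 * Real.pi)⁻¹ * ∫ t in (0:ℝ)..(2 * Real.pi), (M - φ t)⁻¹ := by
  have hπ : (0:ℝ) < 2 * Real.pi := by positivity
  have hint1 : IntervalIntegrable (fun t => (M - φ t)⁻¹) volume 0 (2 * Real.pi) :=
    ((continuous_const.sub hφ).inv₀ fun t => ne_of_gt (by simp only [Pi.sub_apply]; linarith [hlt t])).intervalIntegrable _ _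
  have hint2 : IntervalIntegrable
      (fun t => (M - m)⁻¹ + (φ t - m) * ((M - m) ^ 2)⁻¹) volume 0 (2 * Real.pi) :=
    (continuous_const.add ((hφ.sub continuous_const).mul continuous_const)).intervalIntegrable _ _
  have hmono := intervalIntegral.integral_mono_on (le_of_lt hπ) hint2 hint1
    (fun t _ => tangent hm (hlt t))
  have hcalc : ∫ t in (0:ℝ)..(2 * Real.pi), ((M - m)⁻¹ + (φ t - m) * ((M - m) ^ 2)⁻¹)
      = 2 * Real.pi * (M - m)⁻¹
        + ((∫ t in (0:ℝ)..(2 * Real.pi), φ t) - 2 * Real.pi * m) * ((M - m) ^ 2)⁻¹ := by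
    rw [intervalIntegral.integral_add intervalIntegrable_const
      (((hφ.fun_sub continuous_const).fun_mul continuous_const).intervalIntegrable _ _),
      intervalIntegral.integral_const, intervalIntegral.integral_mul_const,
      intervalIntegral.integral_sub (hφ.intervalIntegrable _ _) intervalIntegrable_const,
      intervalIntegral.integral_const]
    simp only [sub_zero, smul_eq_mul]
  rw [hcalc] at hmono
  have hnn : 0 ≤ ((∫ t in (0:ℝ)..(2 * Real.pi), φ t) - 2 * Real.pi * m) * ((M - m) ^ 2)⁻¹ :=
    mul_nonneg (by linarith) (by positivity)
  have h2 : 2 * Real.pi * (M - m)⁻¹ ≤ ∫ t in (0:ℝ)..(2 * Real.pi), (M - φ t)⁻¹ := by linarith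
  calc (M - m)⁻¹ = (2 * Real.pi)⁻¹ * (2 * Real.pi * (M - m)⁻¹) := by field_simp
  _ ≤ (2 * Real.pi)⁻¹ * ∫ t in (0:ℝ)..(2 * Real.pi), (M - φ t)⁻¹ :=
    mul_le_mul_of_nonneg_left h2 (by positivity)

lemma mean_abs_mul (x0 x1 y0 y1 : ℂ) (r : ℝ) :
    2 * Real.pi * ‖(x0 * x1)‖ ≤ ∫ t in (0:ℝ)..(2 * Real.pi),
      ‖((x0 + ((r:ℂ) * Complex.exp (t * Complex.I)) * y0) *
                   (x1 + ((r:ℂ) * Complex.exp (t * Complex.I)) * y1))‖ := by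
  have hpt : ∀ t : ℝ, (x0 + ((r:ℂ) * Complex.exp (t * Complex.I)) * y0) *
      (x1 + ((r:ℂ) * Complex.exp (t * Complex.I)) * y1)
      = x0 * x1 + (x0 * y1 + x1 * y0) * ((r:ℂ) * Complex.exp (t * Complex.I))
        + (y0 * y1) * ((r:ℂ) * Complex.exp (t * Complex.I)) ^ 2 := fun t => by ring
  have h2 : ∫ t in (0:ℝ)..(2 * Real.pi),
      ((x0 + ((r:ℂ) * Complex.exp (t * Complex.I)) * y0) *
       (x1 + ((r:ℂ) * Complex.exp (t * Complex.I)) * y1))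
      = 2 * Real.pi * (x0 * x1) := by
    rw [intervalIntegral.integral_congr fun t _ => hpt t]
    exact int_quad (x0 * x1) (x0 * y1 + x1 * y0) (y0 * y1) r
  have h3 : 2 * Real.pi * ‖(x0 * x1)‖
      = ‖∫ t in (0:ℝ)..(2 * Real.pi),
          ((x0 + ((r:ℂ) * Complex.exp (t * Complex.I)) * y0) *
           (x1 + ((r:ℂ) * Complex.exp (t * Complex.I)) * y1))‖ := by
    rw [h2]
    have h4 : ‖(2 * Real.pi : ℂ)‖ = 2 * Real.pi := by
      rw [show ((2 : ℂ) * Real.pi) = ((2 * Real.pi : ℝ) : ℂ) by push_cast; ring,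
        Complex.norm_real, Real.norm_eq_abs, abs_of_pos (by positivity)]
    calc 2 * Real.pi * ‖(x0 * x1)‖
        = ‖(2 * Real.pi : ℂ)‖ * ‖(x0 * x1)‖ := by rw [h4]
    _ = ‖(2 * Real.pi * (x0 * x1))‖ := (norm_mul _ _).symm
  rw [h3]
  have := intervalIntegral.norm_integral_le_integral_norm (μ := volume)
    (f := fun t : ℝ => (x0 + ((r:ℂ) * Complex.exp (t * Complex.I)) * y0) *
      (x1 + ((r:ℂ) * Complex.exp (t * Complex.I)) * y1)) (a := 0) (b := 2 * Real.pi)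
    (by positivity)
  simpa using this

lemma omega_open : IsOpen OmegaXY := by
  have h1 : Continuous fun z : Fin 2 → ℂ => ‖(z 0 * z 1)‖ :=
    continuous_norm.comp ((continuous_apply 0).mul (continuous_apply 1))
  have h2 : Continuous fun z : Fin 2 → ℂ => ‖(z 0)‖ :=
    continuous_norm.comp (continuous_apply 0)
  have h3 : Continuous fun z : Fin 2 → ℂ => ‖(z 1)‖ :=
    continuous_norm.comp (continuous_apply 1)
  exact (isOpen_lt h1 continuous_const).inter
    ((isOpen_lt h2 continuous_const).inter (isOpen_lt h3 continuous_const))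

lemma omega_bounded : IsBounded OmegaXY := by
  rw [isBounded_iff_forall_norm_le]
  refine ⟨3, fun z hz => ?_⟩
  rw [pi_norm_le_iff_of_nonneg (by norm_num)]
  intro i
  fin_cases i
  · exact le_of_lt hz.2.1
  · exact le_of_lt hz.2.2

lemma zero_mem_omega : (0 : Fin 2 → ℂ) ∈ OmegaXY := by
  simp [OmegaXY]

lemma omega_star : StarConvex ℝ 0 OmegaXY := by
  intro y hy a b ha hb hab
  simp only [smul_zero, zero_add]
  obtain ⟨h1, h2, h3⟩ := hy
  have hb1 : b ≤ 1 := by linarith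
  have hb0 : |b| ≤ 1 := by rw [_root_.abs_of_nonneg hb]; exact hb1
  refine ⟨?_, ?_, ?_⟩
  · show ‖((b • y) 0 * (b • y) 1)‖ < 1
    simp only [Pi.smul_apply, Complex.real_smul]
    have : ‖(↑b * y 0 * (↑b * y 1))‖ = |b| * |b| * ‖(y 0 * y 1)‖ := by
      simp only [norm_mul, Complex.norm_real, Real.norm_eq_abs]; ring
    rw [this]
    calc |b| * |b| * ‖(y 0 * y 1)‖ ≤ 1 * 1 * ‖(y 0 * y 1)‖ := by gcongr
    _ < 1 := by simpa using h1
  · show ‖((b • y) 0)‖ < 3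
    simp only [Pi.smul_apply, Complex.real_smul, norm_mul, Complex.norm_real, Real.norm_eq_abs]
    calc |b| * ‖(y 0)‖ ≤ 1 * ‖(y 0)‖ := by gcongr
    _ < 3 := by simpa using h2
  · show ‖((b • y) 1)‖ < 3
    simp only [Pi.smul_apply, Complex.real_smul, norm_mul, Complex.norm_real, Real.norm_eq_abs]
    calc |b| * ‖(y 1)‖ ≤ 1 * ‖(y 1)‖ := by gcongr
    _ < 3 := by simpa using h3

lemma omega_connected : IsConnected OmegaXY := by
  have h : IsPathConnected OmegaXY := by
    rw [isPathConnected_iff_pathConnectedSpace]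
    have := omega_star.contractibleSpace ⟨0, zero_mem_omega⟩
    infer_instance
  exact h.isConnected

noncomputable def uExh (z : Fin 2 → ℂ) : ℝ :=
  (1 - ‖(z 0 * z 1)‖)⁻¹ + (9 - Complex.normSq (z 0))⁻¹
    + (9 - Complex.normSq (z 1))⁻¹

lemma mem_omega_facts {z : Fin 2 → ℂ} (hz : z ∈ OmegaXY) :
    0 < 1 - ‖(z 0 * z 1)‖ ∧ 0 < 9 - Complex.normSq (z 0)
      ∧ 0 < 9 - Complex.normSq (z 1) := by
  obtain ⟨h1, h2, h3⟩ := hz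
  have e0 := Complex.normSq_eq_norm_sq (z 0)
  have e1 := Complex.normSq_eq_norm_sq (z 1)
  refine ⟨by linarith, ?_, ?_⟩
  · nlinarith [norm_nonneg (z 0)]
  · nlinarith [norm_nonneg (z 1)]

lemma uExh_contOn : ContinuousOn uExh OmegaXY := by
  have c1 : Continuous fun z : Fin 2 → ℂ => 1 - ‖(z 0 * z 1)‖ :=
    continuous_const.sub
      (continuous_norm.comp ((continuous_apply 0).mul (continuous_apply 1)))
  have c2 : Continuous fun z : Fin 2 → ℂ => 9 - Complex.normSq (z 0) :=
    continuous_const.sub (Complex.continuous_normSq.comp (continuous_apply 0))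
  have c3 : Continuous fun z : Fin 2 → ℂ => 9 - Complex.normSq (z 1) :=
    continuous_const.sub (Complex.continuous_normSq.comp (continuous_apply 1))
  exact ((c1.continuousOn.inv₀ fun z hz => ne_of_gt (mem_omega_facts hz).1).add
    (c2.continuousOn.inv₀ fun z hz => ne_of_gt (mem_omega_facts hz).2.1)).add
    (c3.continuousOn.inv₀ fun z hz => ne_of_gt (mem_omega_facts hz).2.2)

lemma uExh_psh : PlurisubharmonicOn uExh OmegaXY := by
  intro a b r hr hmem
  set w : ℝ → ℂ := fun t => (r:ℂ) * Complex.exp ((t:ℂ) * Complex.I) with hw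
  have hwabs : ∀ t : ℝ, ‖(w t)‖ ≤ r := by
    intro t
    rw [hw]
    simp only [norm_mul, Complex.norm_real, Real.norm_eq_abs, Complex.norm_exp_ofReal_mul_I, mul_one]
    rw [abs_of_pos hr]
  have hmemt : ∀ t : ℝ, ‖((a 0 + w t * b 0) * (a 1 + w t * b 1))‖ < 1
      ∧ Complex.normSq (a 0 + w t * b 0) < 9 ∧ Complex.normSq (a 1 + w t * b 1) < 9 := by
    intro t
    obtain ⟨h1, h2, h3⟩ := hmem (w t) (hwabs t)
    simp only [Pi.add_apply, Pi.smul_apply, smul_eq_mul] at h1 h2 h3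
    have e0 := Complex.normSq_eq_norm_sq (a 0 + w t * b 0)
    have e1 := Complex.normSq_eq_norm_sq (a 1 + w t * b 1)
    refine ⟨h1, ?_, ?_⟩
    · nlinarith [norm_nonneg (a 0 + w t * b 0)]
    · nlinarith [norm_nonneg (a 1 + w t * b 1)]
  have hcen : ‖(a 0 * a 1)‖ < 1 ∧ Complex.normSq (a 0) < 9
      ∧ Complex.normSq (a 1) < 9 := by
    have h0 : a ∈ OmegaXY := by
      have := hmem 0 (by simpa using hr.le)
      simpa using this
    have := mem_omega_facts h0
    exact ⟨by linarith [this.1], by linarith [this.2.1], by linarith [this.2.2]⟩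
  have hwc : Continuous w := cont_w r
  have hc0 : Continuous fun t : ℝ => a 0 + w t * b 0 :=
    continuous_const.add (hwc.mul continuous_const)
  have hc1 : Continuous fun t : ℝ => a 1 + w t * b 1 :=
    continuous_const.add (hwc.mul continuous_const)
  have hf1 : Continuous fun t : ℝ => ‖((a 0 + w t * b 0) * (a 1 + w t * b 1))‖ := by
    exact continuous_norm.comp (hc0.mul hc1)
  have hf2 : Continuous fun t : ℝ => Complex.normSq (a 0 + w t * b 0) := by
    exact Complex.continuous_normSq.comp hc0
  have hf3 : Continuous fun t : ℝ => Complex.normSq (a 1 + w t * b 1) := by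
    exact Complex.continuous_normSq.comp hc1
  -- the three averaged inequalities
  have T1 : (1 - ‖(a 0 * a 1)‖)⁻¹ ≤ (2 * Real.pi)⁻¹ *
      ∫ t in (0:ℝ)..(2 * Real.pi),
        (1 - ‖((a 0 + w t * b 0) * (a 1 + w t * b 1))‖)⁻¹ :=
    avg_inv_ge _ hf1
      (fun t => (hmemt t).1) hcen.1 (by simpa [hw] using mean_abs_mul (a 0) (a 1) (b 0) (b 1) r)
  have T2 : (9 - Complex.normSq (a 0))⁻¹ ≤ (2 * Real.pi)⁻¹ *
      ∫ t in (0:ℝ)..(2 * Real.pi), (9 - Complex.normSq (a 0 + w t * b 0))⁻¹ :=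
    avg_inv_ge _ hf2 (fun t => (hmemt t).2.1) hcen.2.1
      (by rw [show (fun t : ℝ => Complex.normSq (a 0 + w t * b 0))
            = fun t : ℝ => Complex.normSq (a 0 + ((r:ℂ) * Complex.exp ((t:ℂ) * Complex.I)) * b 0)
            from rfl, int_normSq]
          nlinarith [Real.pi_pos, mul_nonneg (sq_nonneg r) (Complex.normSq_nonneg (b 0))])
  have T3 : (9 - Complex.normSq (a 1))⁻¹ ≤ (2 * Real.pi)⁻¹ *
      ∫ t in (0:ℝ)..(2 * Real.pi), (9 - Complex.normSq (a 1 + w t * b 1))⁻¹ :=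
    avg_inv_ge _ hf3 (fun t => (hmemt t).2.2) hcen.2.2
      (by rw [show (fun t : ℝ => Complex.normSq (a 1 + w t * b 1))
            = fun t : ℝ => Complex.normSq (a 1 + ((r:ℂ) * Complex.exp ((t:ℂ) * Complex.I)) * b 1)
            from rfl, int_normSq]
          nlinarith [Real.pi_pos, mul_nonneg (sq_nonneg r) (Complex.normSq_nonneg (b 1))])
  -- rewrite the goal integral as a sum of three integrals
  have hA : Continuous fun t : ℝ =>
      (1 - ‖((a 0 + w t * b 0) * (a 1 + w t * b 1))‖)⁻¹ :=
    (continuous_const.sub hf1).inv₀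
      fun t => ne_of_gt (by simp only [Pi.sub_apply]; linarith [(hmemt t).1])
  have hB : Continuous fun t : ℝ => (9 - Complex.normSq (a 0 + w t * b 0))⁻¹ :=
    (continuous_const.sub hf2).inv₀
      fun t => ne_of_gt (by simp only [Pi.sub_apply]; linarith [(hmemt t).2.1])
  have hC : Continuous fun t : ℝ => (9 - Complex.normSq (a 1 + w t * b 1))⁻¹ :=
    (continuous_const.sub hf3).inv₀
      fun t => ne_of_gt (by simp only [Pi.sub_apply]; linarith [(hmemt t).2.2])
  have hsplit : ∫ t in (0:ℝ)..(2 * Real.pi),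
      uExh (a + ((r:ℂ) * Complex.exp ((t:ℂ) * Complex.I)) • b)
      = (∫ t in (0:ℝ)..(2 * Real.pi),
          (1 - ‖((a 0 + w t * b 0) * (a 1 + w t * b 1))‖)⁻¹)
        + (∫ t in (0:ℝ)..(2 * Real.pi), (9 - Complex.normSq (a 0 + w t * b 0))⁻¹)
        + (∫ t in (0:ℝ)..(2 * Real.pi), (9 - Complex.normSq (a 1 + w t * b 1))⁻¹) := by
    rw [show (fun t : ℝ => uExh (a + ((r:ℂ) * Complex.exp ((t:ℂ) * Complex.I)) • b))
        = fun t : ℝ =>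
          (1 - ‖((a 0 + w t * b 0) * (a 1 + w t * b 1))‖)⁻¹
          + ((9 - Complex.normSq (a 0 + w t * b 0))⁻¹
          + (9 - Complex.normSq (a 1 + w t * b 1))⁻¹) from funext fun t => by
        simp only [uExh, Pi.add_apply, Pi.smul_apply, smul_eq_mul, hw]
        ring]
    rw [intervalIntegral.integral_add (hA.intervalIntegrable _ _)
      ((hB.fun_add hC).intervalIntegrable _ _),
      intervalIntegral.integral_add (hB.intervalIntegrable _ _) (hC.intervalIntegrable _ _)]
    ring
  rw [hsplit]
  have hπ : (0:ℝ) < (2 * Real.pi)⁻¹ := by positivity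
  calc uExh a = (1 - ‖(a 0 * a 1)‖)⁻¹ + (9 - Complex.normSq (a 0))⁻¹
      + (9 - Complex.normSq (a 1))⁻¹ := rfl
  _ ≤ _ := by
      rw [mul_add, mul_add]
      exact add_le_add (add_le_add T1 T2) T3

lemma inv_le_flip {x y : ℝ} (hx : 0 < x) (h : x⁻¹ ≤ y) : y⁻¹ ≤ x := by
  have hx' : 0 < x⁻¹ := by positivity
  have hy : 0 < y := lt_of_lt_of_le hx' h
  rw [← inv_inv x]
  gcongr

lemma uExh_sublevel_compact (c : ℝ) : IsCompact {z | z ∈ OmegaXY ∧ uExh z ≤ c} := by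
  set c' : ℝ := max c 1 with hc'
  have hc1 : (1:ℝ) ≤ c' := le_max_right _ _
  have hc0 : (0:ℝ) < c' := by linarith
  have hcinv : (0:ℝ) < c'⁻¹ := by positivity
  set C : Set (Fin 2 → ℂ) := {z | ‖(z 0 * z 1)‖ ≤ 1 - c'⁻¹
    ∧ Complex.normSq (z 0) ≤ 9 - c'⁻¹ ∧ Complex.normSq (z 1) ≤ 9 - c'⁻¹} with hC
  have hCΩ : C ⊆ OmegaXY := by
    intro z hz
    obtain ⟨h1, h2, h3⟩ := hz
    have e0 := Complex.normSq_eq_norm_sq (z 0)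
    have e1 := Complex.normSq_eq_norm_sq (z 1)
    refine ⟨by linarith, ?_, ?_⟩
    · nlinarith [norm_nonneg (z 0)]
    · nlinarith [norm_nonneg (z 1)]
  have hCclosed : IsClosed C := by
    have c1 : Continuous fun z : Fin 2 → ℂ => ‖(z 0 * z 1)‖ :=
      continuous_norm.comp ((continuous_apply 0).mul (continuous_apply 1))
    have c2 : Continuous fun z : Fin 2 → ℂ => Complex.normSq (z 0) := by
      exact Complex.continuous_normSq.comp (continuous_apply 0)
    have c3 : Continuous fun z : Fin 2 → ℂ => Complex.normSq (z 1) := by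
      exact Complex.continuous_normSq.comp (continuous_apply 1)
    exact ((isClosed_le c1 continuous_const).inter
      ((isClosed_le c2 continuous_const).inter (isClosed_le c3 continuous_const)))
  have hCcompact : IsCompact C :=
    Metric.isCompact_of_isClosed_isBounded hCclosed (omega_bounded.subset hCΩ)
  have hSC : {z | z ∈ OmegaXY ∧ uExh z ≤ c} ⊆ C := by
    rintro z ⟨hzΩ, hzu⟩
    obtain ⟨p1, p2, p3⟩ := mem_omega_facts hzΩ
    have t1 : (0:ℝ) < (1 - ‖(z 0 * z 1)‖)⁻¹ := by positivity
    have t2 : (0:ℝ) < (9 - Complex.normSq (z 0))⁻¹ := by positivity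
    have t3 : (0:ℝ) < (9 - Complex.normSq (z 1))⁻¹ := by positivity
    have hu : uExh z = (1 - ‖(z 0 * z 1)‖)⁻¹ + (9 - Complex.normSq (z 0))⁻¹
        + (9 - Complex.normSq (z 1))⁻¹ := rfl
    have b1 : (1 - ‖(z 0 * z 1)‖)⁻¹ ≤ c' := by
      have : (1 - ‖(z 0 * z 1)‖)⁻¹ ≤ c := by linarith
      linarith [le_max_left c 1]
    have b2 : (9 - Complex.normSq (z 0))⁻¹ ≤ c' := by
      have : (9 - Complex.normSq (z 0))⁻¹ ≤ c := by linarith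
      linarith [le_max_left c 1]
    have b3 : (9 - Complex.normSq (z 1))⁻¹ ≤ c' := by
      have : (9 - Complex.normSq (z 1))⁻¹ ≤ c := by linarith
      linarith [le_max_left c 1]
    refine ⟨?_, ?_, ?_⟩
    · have := inv_le_flip p1 b1; linarith
    · have := inv_le_flip p2 b2; linarith
    · have := inv_le_flip p3 b3; linarith
  have hSeq : {z | z ∈ OmegaXY ∧ uExh z ≤ c} = C ∩ uExh ⁻¹' Set.Iic c := by
    ext z
    constructor
    · intro hz; exact ⟨hSC hz, hz.2⟩
    · rintro ⟨hzC, hzu⟩; exact ⟨hCΩ hzC, hzu⟩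
  rw [hSeq]
  have hclosed2 : IsClosed (C ∩ uExh ⁻¹' Set.Iic c) :=
    (uExh_contOn.mono hCΩ).preimage_isClosed_of_isClosed hCclosed isClosed_Iic
  exact hCcompact.of_isClosed_subset hclosed2 Set.inter_subset_left

def e2 : (Σ _ : Fin 2, Fin 2) ≃ (Fin 2 ⊕ Fin 2) where
  toFun p := if p.1 = 0 then Sum.inl p.2 else Sum.inr p.2
  invFun q := Sum.elim (fun j => ⟨0, j⟩) (fun j => ⟨1, j⟩) q
  left_inv p := by rcases p with ⟨i, j⟩; fin_cases i <;> simp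
  right_inv q := by rcases q with j | j <;> simp

def bR : Module.Basis (Fin 2 ⊕ Fin 2) ℝ (Fin 2 → ℂ) :=
  (Pi.basis fun _ : Fin 2 => Complex.basisOneI).reindex e2

def shearMap (α β : ℝ) (w : ℂ) : (Fin 2 → ℂ) →ₗ[ℝ] (Fin 2 → ℂ) where
  toFun z := ![(α:ℂ) * z 0 + w * z 1, (β:ℂ) * z 1]
  map_add' x y := by
    funext i
    fin_cases i <;> simp <;> ring
  map_smul' r x := by
    funext i
    fin_cases i <;> simp [Complex.real_smul] <;> ring

lemma shearMap_det (α β : ℝ) (w : ℂ) :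
    LinearMap.det (shearMap α β w) = α ^ 2 * β ^ 2 := by
  rw [← LinearMap.det_toMatrix bR]
  set M := LinearMap.toMatrix bR bR (shearMap α β w) with hMdef
  have hA : M.toBlocks₁₁ = α • (1 : Matrix (Fin 2) (Fin 2) ℝ) := by
    ext i j
    simp only [hMdef, Matrix.toBlocks₁₁, LinearMap.toMatrix_apply, bR, e2,
      Module.Basis.repr_reindex_apply, Matrix.of_apply]
    fin_cases i <;> fin_cases j <;>
      simp [Pi.basis_apply, Pi.basis_repr, shearMap,
        Complex.coe_basisOneI_repr, Matrix.smul_apply, Matrix.one_apply]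
  have hC : M.toBlocks₂₁ = 0 := by
    ext i j
    simp only [hMdef, Matrix.toBlocks₂₁, LinearMap.toMatrix_apply, bR, e2,
      Module.Basis.repr_reindex_apply, Matrix.of_apply]
    fin_cases i <;> fin_cases j <;>
      simp [Pi.basis_apply, Pi.basis_repr, shearMap, Complex.coe_basisOneI_repr]
  have hD : M.toBlocks₂₂ = β • (1 : Matrix (Fin 2) (Fin 2) ℝ) := by
    ext i j
    simp only [hMdef, Matrix.toBlocks₂₂, LinearMap.toMatrix_apply, bR, e2,
      Module.Basis.repr_reindex_apply, Matrix.of_apply]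
    fin_cases i <;> fin_cases j <;>
      simp [Pi.basis_apply, Pi.basis_repr, shearMap,
        Complex.coe_basisOneI_repr, Matrix.smul_apply, Matrix.one_apply]
  calc M.det
      = (Matrix.fromBlocks M.toBlocks₁₁ M.toBlocks₁₂ M.toBlocks₂₁ M.toBlocks₂₂).det := by
        rw [Matrix.fromBlocks_toBlocks]
  _ = (Matrix.fromBlocks (α • (1 : Matrix (Fin 2) (Fin 2) ℝ)) M.toBlocks₁₂ 0
        (β • (1 : Matrix (Fin 2) (Fin 2) ℝ))).det := by rw [hA, hC, hD]
  _ = α ^ 2 * β ^ 2 := by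
        rw [Matrix.det_fromBlocks_zero₂₁, Matrix.det_smul, Matrix.det_smul]
        simp

lemma complete_square (a : ℝ) (ha : 0 < a) (b : ℝ) (c : ℂ) (x y : ℂ) :
    a * normSq x + b * normSq y + 2 * (c * x * (starRingEnd ℂ) y).re
      = a * normSq (x + ((starRingEnd ℂ) c / (a:ℂ)) * y)
        + ((a * b - normSq c) / a) * normSq y := by
  have ha' : (a:ℂ) ≠ 0 := Complex.ofReal_ne_zero.mpr (ne_of_gt ha)
  rw [Complex.normSq_add]
  have h1 : Complex.normSq (((starRingEnd ℂ) c / (a:ℂ)) * y)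
      = normSq c / a ^ 2 * normSq y := by
    rw [map_mul, map_div₀, Complex.normSq_conj, Complex.normSq_ofReal]
    ring
  have h2 : (x * (starRingEnd ℂ) (((starRingEnd ℂ) c / (a:ℂ)) * y)).re
      = a⁻¹ * (c * x * (starRingEnd ℂ) y).re := by
    have e : x * (starRingEnd ℂ) (((starRingEnd ℂ) c / (a:ℂ)) * y)
        = ((a⁻¹ : ℝ) : ℂ) * (c * x * (starRingEnd ℂ) y) := by
      rw [map_mul, map_div₀, Complex.conj_conj, Complex.conj_ofReal]
      push_cast
      field_simp
    rw [e, Complex.re_ofReal_mul]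
  rw [h1, h2]
  field_simp
  ring

lemma vol_ellipsoid (a b : ℝ) (c : ℂ) (ha : 0 < a) (hb : 0 < b)
    (hd : 0 < a * b - Complex.normSq c) :
    volume {z : Fin 2 → ℂ |
        a * normSq (z 0) + b * normSq (z 1) + 2 * (c * z 0 * (starRingEnd ℂ) (z 1)).re < 1}
      = ENNReal.ofReal ((a * b - Complex.normSq c)⁻¹)
        * volume {z : Fin 2 → ℂ | normSq (z 0) + normSq (z 1) < 1} := by
  set d : ℝ := a * b - Complex.normSq c with hdd
  set sa : ℝ := Real.sqrt a with hsa
  set sd : ℝ := Real.sqrt (d / a) with hsd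
  have hsa0 : 0 < sa := Real.sqrt_pos.mpr ha
  have hsd0 : 0 < sd := Real.sqrt_pos.mpr (by positivity)
  have hsa2 : sa ^ 2 = a := Real.sq_sqrt ha.le
  have hsd2 : sd ^ 2 = d / a := Real.sq_sqrt (by positivity)
  set e : ℂ := (starRingEnd ℂ) c / (a:ℂ) with he
  set L := shearMap sa⁻¹ sd⁻¹ (-(e * ((sd⁻¹ : ℝ) : ℂ))) with hL
  have key : ∀ u v : ℂ,
      a * normSq (((sa⁻¹ : ℝ) : ℂ) * u + -(e * ((sd⁻¹ : ℝ) : ℂ)) * v)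
        + b * normSq (((sd⁻¹ : ℝ) : ℂ) * v)
        + 2 * (c * (((sa⁻¹ : ℝ) : ℂ) * u + -(e * ((sd⁻¹ : ℝ) : ℂ)) * v)
            * (starRingEnd ℂ) (((sd⁻¹ : ℝ) : ℂ) * v)).re
      = normSq u + normSq v := by
    intro u v
    rw [complete_square a ha b c]
    have hx : ((sa⁻¹ : ℝ) : ℂ) * u + -(e * ((sd⁻¹ : ℝ) : ℂ)) * v
        + e * (((sd⁻¹ : ℝ) : ℂ) * v) = ((sa⁻¹ : ℝ) : ℂ) * u := by ring
    rw [hx, map_mul, map_mul, Complex.normSq_ofReal, Complex.normSq_ofReal]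
    have e1 : a * ((sa⁻¹) * (sa⁻¹) * normSq u) = normSq u := by
      rw [show sa⁻¹ * sa⁻¹ = (sa ^ 2)⁻¹ by rw [sq]; rw [mul_inv], hsa2]
      field_simp
    have e2 : d / a * ((sd⁻¹) * (sd⁻¹) * normSq v) = normSq v := by
      rw [show sd⁻¹ * sd⁻¹ = (sd ^ 2)⁻¹ by rw [sq]; rw [mul_inv], hsd2]
      have : d / a ≠ 0 := by positivity
      field_simp
    linear_combination e1 + e2
  have himg : {z : Fin 2 → ℂ |
      a * normSq (z 0) + b * normSq (z 1) + 2 * (c * z 0 * (starRingEnd ℂ) (z 1)).re < 1}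
      = L '' {z : Fin 2 → ℂ | normSq (z 0) + normSq (z 1) < 1} := by
    ext z
    constructor
    · intro hz
      refine ⟨![((sa : ℝ) : ℂ) * (z 0 + e * z 1), ((sd : ℝ) : ℂ) * z 1], ?_, ?_⟩
      · show normSq _ + normSq _ < 1
        have hLz : L ![((sa : ℝ) : ℂ) * (z 0 + e * z 1), ((sd : ℝ) : ℂ) * z 1] = z := by
          funext i
          have hsa' : ((sa : ℝ) : ℂ) ≠ 0 := Complex.ofReal_ne_zero.mpr (ne_of_gt hsa0)
          have hsd' : ((sd : ℝ) : ℂ) ≠ 0 := Complex.ofReal_ne_zero.mpr (ne_of_gt hsd0)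
          fin_cases i <;>
            simp [hL, shearMap, Complex.ofReal_inv] <;> field_simp <;> ring
        have := key (((sa : ℝ) : ℂ) * (z 0 + e * z 1)) (((sd : ℝ) : ℂ) * z 1)
        have hLz0 : ((sa⁻¹ : ℝ) : ℂ) * (((sa : ℝ) : ℂ) * (z 0 + e * z 1))
            + -(e * ((sd⁻¹ : ℝ) : ℂ)) * (((sd : ℝ) : ℂ) * z 1) = z 0 := by
          have h0 := congrFun hLz 0
          simpa [hL, shearMap] using h0
        have hLz1 : ((sd⁻¹ : ℝ) : ℂ) * (((sd : ℝ) : ℂ) * z 1) = z 1 := by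
          have h1 := congrFun hLz 1
          simpa [hL, shearMap] using h1
        rw [hLz0, hLz1] at this
        simp only [Matrix.cons_val_zero, Matrix.cons_val_one, Matrix.head_cons]
        rw [← this]
        exact hz
      · funext i
        have hsa' : ((sa : ℝ) : ℂ) ≠ 0 := Complex.ofReal_ne_zero.mpr (ne_of_gt hsa0)
        have hsd' : ((sd : ℝ) : ℂ) ≠ 0 := Complex.ofReal_ne_zero.mpr (ne_of_gt hsd0)
        fin_cases i <;>
          simp [hL, shearMap, Complex.ofReal_inv] <;> field_simp <;> ring
    · rintro ⟨z', hz', rfl⟩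
      show a * normSq ((L z') 0) + b * normSq ((L z') 1)
        + 2 * (c * (L z') 0 * (starRingEnd ℂ) ((L z') 1)).re < 1
      have h0 : (L z') 0 = ((sa⁻¹ : ℝ) : ℂ) * z' 0 + -(e * ((sd⁻¹ : ℝ) : ℂ)) * z' 1 := by
        simp [hL, shearMap]
      have h1 : (L z') 1 = ((sd⁻¹ : ℝ) : ℂ) * z' 1 := by simp [hL, shearMap]
      rw [h0, h1, key (z' 0) (z' 1)]
      exact hz'
  rw [himg, Measure.addHaar_image_linearMap]
  congr 1
  rw [hL, shearMap_det]
  have : (sa⁻¹) ^ 2 * (sd⁻¹) ^ 2 = d⁻¹ := by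
    rw [inv_pow, inv_pow, hsa2, hsd2]
    field_simp
  rw [this, abs_of_pos (by positivity)]

namespace PosDefHermForm

variable (k : PosDefHermForm 2)

def E0 : Fin 2 → ℂ := ![1, 0]
def E1 : Fin 2 → ℂ := ![0, 1]

lemma add_right (x w w' : Fin 2 → ℂ) : k.form x (w + w') = k.form x w + k.form x w' := by
  rw [k.conj_symm x (w + w'), k.add_left, map_add, ← k.conj_symm, ← k.conj_symm]

lemma smul_right (a : ℂ) (x w : Fin 2 → ℂ) :
    k.form x (a • w) = (starRingEnd ℂ) a * k.form x w := by
  rw [k.conj_symm x (a • w), k.smul_left, map_mul, ← k.conj_symm]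

lemma herm_expand (z : Fin 2 → ℂ) :
    (k.form z z).re = (k.form E0 E0).re * normSq (z 0) + (k.form E1 E1).re * normSq (z 1)
      + 2 * (k.form E0 E1 * z 0 * (starRingEnd ℂ) (z 1)).re := by
  have hz : z = z 0 • E0 + z 1 • E1 := by
    funext i
    fin_cases i <;> simp [E0, E1]
  have h00 : k.form E0 E0 = (((k.form E0 E0).re : ℝ) : ℂ) :=
    (Complex.conj_eq_iff_re.mp (k.conj_symm E0 E0).symm).symm
  have h11 : k.form E1 E1 = (((k.form E1 E1).re : ℝ) : ℂ) :=
    (Complex.conj_eq_iff_re.mp (k.conj_symm E1 E1).symm).symm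
  have h10 : k.form E1 E0 = (starRingEnd ℂ) (k.form E0 E1) := k.conj_symm E1 E0
  have hsplit : k.form z z
      = z 0 * ((starRingEnd ℂ) (z 0) * k.form E0 E0 + (starRingEnd ℂ) (z 1) * k.form E0 E1)
      + z 1 * ((starRingEnd ℂ) (z 0) * k.form E1 E0
          + (starRingEnd ℂ) (z 1) * k.form E1 E1) := by
    conv_lhs => rw [hz]
    rw [k.add_left, k.smul_left, k.smul_left, k.add_right, k.add_right,
      k.smul_right, k.smul_right, k.smul_right, k.smul_right]
  rw [hsplit, h10]
  rw [h00, h11]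
  set A := (k.form E0 E0).re
  set B := (k.form E1 E1).re
  set C := k.form E0 E1
  simp only [Complex.add_re, Complex.mul_re, Complex.mul_im, Complex.conj_re, Complex.conj_im,
    Complex.ofReal_re, Complex.ofReal_im, Complex.add_im, Complex.normSq_apply]
  ring

lemma E0_ne : (E0 : Fin 2 → ℂ) ≠ 0 := by
  intro h
  have := congrFun h 0
  simp [E0] at this

lemma E1_ne : (E1 : Fin 2 → ℂ) ≠ 0 := by
  intro h
  have := congrFun h 1
  simp [E1] at this

lemma A_pos : 0 < (k.form E0 E0).re := k.posdef E0 E0_ne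
lemma B_pos : 0 < (k.form E1 E1).re := k.posdef E1 E1_ne

lemma det_pos : 0 < (k.form E0 E0).re * (k.form E1 E1).re - normSq (k.form E0 E1) := by
  set A := (k.form E0 E0).re with hA
  set B := (k.form E1 E1).re with hB
  set C := k.form E0 E1 with hC
  have hApos : 0 < A := k.A_pos
  have hzz : (![-(starRingEnd ℂ) C, ((A : ℝ) : ℂ)] : Fin 2 → ℂ) ≠ 0 := by
    intro h
    have := congrFun h 1
    simp at this
    exact (ne_of_gt hApos) this
  have hval := k.posdef _ hzz
  rw [k.herm_expand] at hval
  simp only [Matrix.cons_val_zero, Matrix.cons_val_one, Matrix.head_cons] at hval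
  rw [Complex.conj_ofReal] at hval
  have h1 : normSq (-(starRingEnd ℂ) C) = normSq C := by
    simp [Complex.normSq_conj]
  have h2 : normSq ((A : ℝ) : ℂ) = A ^ 2 := by rw [Complex.normSq_ofReal]; ring
  have h3 : (C * -(starRingEnd ℂ) C * ((A:ℝ) : ℂ)).re = -(normSq C * A) := by
    rw [show C * -(starRingEnd ℂ) C * ((A:ℝ) : ℂ) = -(C * (starRingEnd ℂ) C * ((A:ℝ):ℂ)) by ring,
      Complex.mul_conj, ← Complex.ofReal_mul]
    simp
  rw [← hA, ← hB, ← hC] at hval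
  rw [h1, h2, h3] at hval
  nlinarith [hApos]

end PosDefHermForm

namespace PosDefHermForm

variable (k : PosDefHermForm 2)

lemma ball_eq : k.ball = {z : Fin 2 → ℂ |
    (k.form E0 E0).re * normSq (z 0) + (k.form E1 E1).re * normSq (z 1)
      + 2 * (k.form E0 E1 * z 0 * (starRingEnd ℂ) (z 1)).re < 1} := by
  ext z
  show (k.form z z).re < 1 ↔ _
  rw [k.herm_expand]
  rfl

lemma det_ge (hsub : k.ball ⊆ OmegaXY) :
    1 / 4 ≤ (k.form E0 E0).re * (k.form E1 E1).re - normSq (k.form E0 E1) := by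
  set A := (k.form E0 E0).re with hA
  set B := (k.form E1 E1).re with hB
  set C := k.form E0 E1 with hC
  have hApos : 0 < A := k.A_pos
  have hBpos : 0 < B := k.B_pos
  have hdpos : 0 < A * B - normSq C := k.det_pos
  by_contra hcon
  push_neg at hcon
  set s : ℝ := Real.sqrt (A * B) with hs
  have hs0 : 0 < s := Real.sqrt_pos.mpr (by positivity)
  have hs2 : s ^ 2 = A * B := Real.sq_sqrt (by positivity)
  have habsC : ‖C‖ < s := by
    have h1 : ‖C‖ ^ 2 = normSq C := Complex.sq_norm C
    nlinarith [norm_nonneg C]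
  set g : ℝ := s - ‖C‖ with hg
  have hg0 : 0 < g := by linarith
  have hg12 : g < 1 / 2 := by nlinarith [norm_nonneg C, Complex.sq_norm C]
  set t : ℝ := (2 * g)⁻¹ with ht
  have hteq : t * (2 * g) = 1 := inv_mul_cancel₀ (by positivity)
  have ht1 : 1 < t := by nlinarith
  set m : ℝ := (1 + t) / 2 with hm
  have hm1 : 1 < m := by linarith
  have hmg : 2 * m * g < 1 := by nlinarith
  set ω : ℂ := if C = 0 then 1 else -(starRingEnd ℂ) C / ((‖C‖ : ℝ) : ℂ) with hω
  have hnω : normSq ω = 1 := by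
    by_cases h : C = 0
    · simp [hω, h]
    · rw [hω, if_neg h, map_div₀, Complex.normSq_neg, Complex.normSq_conj,
        Complex.normSq_ofReal, ← Complex.sq_norm]
      have ha : ‖C‖ ≠ 0 := norm_ne_zero_iff.mpr h
      field_simp
  have hCω : C * ω = -(((‖C‖ : ℝ)) : ℂ) := by
    by_cases h : C = 0
    · simp [hω, h]
    · rw [hω, if_neg h]
      have ha : ((‖C‖ : ℝ) : ℂ) ≠ 0 :=
        Complex.ofReal_ne_zero.mpr (norm_ne_zero_iff.mpr h)
      rw [show C * (-(starRingEnd ℂ) C / ((‖C‖ : ℝ) : ℂ))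
          = -(C * (starRingEnd ℂ) C) / ((‖C‖ : ℝ) : ℂ) by ring,
        Complex.mul_conj]
      rw [div_eq_iff ha]
      rw [show -(((‖C‖ : ℝ)) : ℂ) * ((‖C‖ : ℝ) : ℂ)
          = -(((‖C‖ * ‖C‖ : ℝ)) : ℂ) by push_cast; ring,
        ← sq, Complex.sq_norm]
  set x : ℝ := Real.sqrt (s * m / A) with hx
  set y : ℝ := Real.sqrt (s * m / B) with hy
  have hm0 : 0 < m := by linarith
  have hx2 : x * x = s * m / A := Real.mul_self_sqrt (by positivity)
  have hy2 : y * y = s * m / B := Real.mul_self_sqrt (by positivity)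
  have hxy : x * y = m := by
    rw [hx, hy, ← Real.sqrt_mul (by positivity)]
    have harg : s * m / A * (s * m / B) = m ^ 2 := by
      field_simp
      nlinarith [hs2]
    rw [harg]
    exact Real.sqrt_sq hm0.le
  set z : Fin 2 → ℂ := ![(x : ℂ) * ω, (y : ℂ)] with hz
  have hzball : z ∈ k.ball := by
    rw [ball_eq]
    show A * normSq (z 0) + B * normSq (z 1) + 2 * (C * z 0 * (starRingEnd ℂ) (z 1)).re < 1
    have hz0 : z 0 = (x : ℂ) * ω := by simp [hz]
    have hz1 : z 1 = (y : ℂ) := by simp [hz]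
    rw [hz0, hz1, Complex.conj_ofReal, map_mul, Complex.normSq_ofReal,
      Complex.normSq_ofReal, hnω]
    have hre : (C * ((x : ℂ) * ω) * (y : ℂ)).re = -(‖C‖ * (x * y)) := by
      rw [show C * ((x : ℂ) * ω) * (y : ℂ) = (C * ω) * ((x : ℂ) * (y : ℂ)) by ring, hCω,
        ← Complex.ofReal_mul, ← Complex.ofReal_neg, ← Complex.ofReal_mul]
      rw [Complex.ofReal_re]
      ring
    rw [hre, hxy]
    have e1 : A * (x * x * 1) = s * m := by
      rw [hx2]
      field_simp
    have e2 : B * (y * y) = s * m := by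
      rw [hy2]
      field_simp
    rw [e1, e2]
    have : s * m + s * m + 2 * -(‖C‖ * m) = 2 * m * g := by
      rw [hg]
      ring
    rw [this]
    exact hmg
  have habsω : ‖ω‖ = 1 := by
    have h2 : ‖ω‖ ^ 2 = 1 := by rw [Complex.sq_norm, hnω]
    have h3 : (‖ω‖ - 1) * (‖ω‖ + 1) = 0 := by linear_combination h2
    rcases mul_eq_zero.mp h3 with h | h
    · linarith
    · linarith [norm_nonneg ω]
  have habs : ‖(z 0 * z 1)‖ < 1 := (hsub hzball).1
  have : ‖(z 0 * z 1)‖ = m := by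
    have hz0 : z 0 = (x : ℂ) * ω := by simp [hz]
    have hz1 : z 1 = (y : ℂ) := by simp [hz]
    have hx0 : (0:ℝ) ≤ x := Real.sqrt_nonneg _
    have hy0 : (0:ℝ) ≤ y := Real.sqrt_nonneg _
    rw [hz0, hz1, norm_mul, norm_mul, Complex.norm_real, Real.norm_eq_abs, Complex.norm_real, Real.norm_eq_abs, habsω,
      _root_.abs_of_nonneg hx0, _root_.abs_of_nonneg hy0, mul_one, hxy]
  linarith

end PosDefHermForm

namespace PosDefHermForm

variable (k : PosDefHermForm 2)

lemma vol_ball :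
    volume k.ball = ENNReal.ofReal
        (((k.form E0 E0).re * (k.form E1 E1).re - normSq (k.form E0 E1))⁻¹)
      * volume {z : Fin 2 → ℂ | normSq (z 0) + normSq (z 1) < 1} := by
  rw [k.ball_eq]
  exact vol_ellipsoid _ _ _ k.A_pos k.B_pos k.det_pos


end PosDefHermForm

lemma pForm_re (p : ℝ) (z w : Fin 2 → ℂ) :
    (((p^2/2 : ℝ) : ℂ) * (z 0 * (starRingEnd ℂ) (z 0))
      + ((p⁻¹^2/2 : ℝ) : ℂ) * (z 1 * (starRingEnd ℂ) (z 1))).re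
      = p^2/2 * normSq (z 0) + p⁻¹^2/2 * normSq (z 1) := by
  rw [Complex.mul_conj, Complex.mul_conj, ← Complex.ofReal_mul, ← Complex.ofReal_mul,
    ← Complex.ofReal_add, Complex.ofReal_re]

noncomputable def pForm (p : ℝ) (hp : 0 < p) : PosDefHermForm 2 where
  form z w := ((p^2/2 : ℝ) : ℂ) * (z 0 * (starRingEnd ℂ) (w 0))
    + ((p⁻¹^2/2 : ℝ) : ℂ) * (z 1 * (starRingEnd ℂ) (w 1))
  add_left z z' w := by
    simp only [Pi.add_apply]
    ring
  smul_left a z w := by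
    simp only [Pi.smul_apply, smul_eq_mul]
    ring
  conj_symm z w := by
    simp only [map_add, map_mul, Complex.conj_conj, Complex.conj_ofReal]
    ring
  posdef z hz := by
    rw [pForm_re p z z]
    have hp2 : 0 < p^2/2 := by positivity
    have hq2 : 0 < p⁻¹^2/2 := by
      have : 0 < p⁻¹ := inv_pos.mpr hp
      positivity
    have : z 0 ≠ 0 ∨ z 1 ≠ 0 := by
      by_contra hcon
      push_neg at hcon
      apply hz
      funext i
      fin_cases i <;> simp [hcon.1, hcon.2]
    rcases this with h | h
    · nlinarith [Complex.normSq_pos.mpr h, Complex.normSq_nonneg (z 1)]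
    · nlinarith [Complex.normSq_pos.mpr h, Complex.normSq_nonneg (z 0)]

lemma pForm_ball (p : ℝ) (hp : 0 < p) : (pForm p hp).ball = ellP p := by
  ext z
  show (((p^2/2 : ℝ) : ℂ) * (z 0 * (starRingEnd ℂ) (z 0))
      + ((p⁻¹^2/2 : ℝ) : ℂ) * (z 1 * (starRingEnd ℂ) (z 1))).re < 1 ↔ _
  rw [pForm_re p z z]
  rfl

open PosDefHermForm in
lemma pForm_A (p : ℝ) (hp : 0 < p) : ((pForm p hp).form E0 E0).re = p^2/2 := by
  show (((p^2/2 : ℝ) : ℂ) * (E0 0 * (starRingEnd ℂ) (E0 0))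
      + ((p⁻¹^2/2 : ℝ) : ℂ) * (E0 1 * (starRingEnd ℂ) (E0 1))).re = _
  have h0 : E0 0 = 1 := rfl
  have h1 : E0 1 = 0 := rfl
  rw [h0, h1]
  simp only [map_zero, map_one, mul_zero, mul_one, zero_add, add_zero, Complex.ofReal_re]

open PosDefHermForm in
lemma pForm_B (p : ℝ) (hp : 0 < p) : ((pForm p hp).form E1 E1).re = p⁻¹^2/2 := by
  show (((p^2/2 : ℝ) : ℂ) * (E1 0 * (starRingEnd ℂ) (E1 0))
      + ((p⁻¹^2/2 : ℝ) : ℂ) * (E1 1 * (starRingEnd ℂ) (E1 1))).re = _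
  have h0 : E1 0 = 0 := rfl
  have h1 : E1 1 = 1 := rfl
  rw [h0, h1]
  simp only [map_zero, map_one, mul_zero, mul_one, zero_add, add_zero, zero_mul,
    Complex.ofReal_re]

open PosDefHermForm in
lemma pForm_C (p : ℝ) (hp : 0 < p) : (pForm p hp).form E0 E1 = 0 := by
  show ((p^2/2 : ℝ) : ℂ) * (E0 0 * (starRingEnd ℂ) (E1 0))
      + ((p⁻¹^2/2 : ℝ) : ℂ) * (E0 1 * (starRingEnd ℂ) (E1 1)) = 0
  have h0 : E1 0 = 0 := rfl
  have h1 : E0 1 = 0 := rfl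
  rw [h0, h1]
  simp

lemma inv_le_flip' {x y : ℝ} (hx : 0 < x) (h : x⁻¹ ≤ y) : y⁻¹ ≤ x := by
  have hx' : 0 < x⁻¹ := by positivity
  have hy : 0 < y := lt_of_lt_of_le hx' h
  rw [← inv_inv x]
  gcongr

lemma ellP_subset (p : ℝ) (hp1 : 1/2 < p) (hp2 : p < 2) : ellP p ⊆ OmegaXY := by
  have hp : 0 < p := by linarith
  have hq : 0 < p⁻¹ := inv_pos.mpr hp
  have hpq : p * p⁻¹ = 1 := mul_inv_cancel₀ (ne_of_gt hp)
  have hq2 : p⁻¹ < 2 := by nlinarith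
  intro z hz
  have hlt : p^2/2 * normSq (z 0) + p⁻¹^2/2 * normSq (z 1) < 1 := hz
  have hs := norm_nonneg (z 0)
  have ht := norm_nonneg (z 1)
  have hs2 : ‖(z 0)‖ ^ 2 = normSq (z 0) := Complex.sq_norm (z 0)
  have ht2 : ‖(z 1)‖ ^ 2 = normSq (z 1) := Complex.sq_norm (z 1)
  refine ⟨?_, ?_, ?_⟩
  · rw [norm_mul]
    nlinarith [sq_nonneg (p * ‖(z 0)‖ - p⁻¹ * ‖(z 1)‖),
      Complex.normSq_nonneg (z 0), Complex.normSq_nonneg (z 1)]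
  · have hterm : 0 ≤ p⁻¹^2/2 * normSq (z 1) :=
      mul_nonneg (by positivity) (Complex.normSq_nonneg _)
    have h1 : p^2/2 * normSq (z 0) < 1 := by linarith
    nlinarith [mul_le_mul_of_nonneg_right hp1.le hs]
  · have hq12 : 1/2 < p⁻¹ := by nlinarith
    have hterm : 0 ≤ p^2/2 * normSq (z 0) :=
      mul_nonneg (by positivity) (Complex.normSq_nonneg _)
    have h1 : p⁻¹^2/2 * normSq (z 1) < 1 := by linarith
    nlinarith [mul_le_mul_of_nonneg_right hq12.le ht]

lemma pForm_maximal (p : ℝ) (hp : 0 < p) (kk : PosDefHermForm 2) (hkk : kk.ball ⊆ OmegaXY) :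
    volume kk.ball ≤ volume (pForm p hp).ball := by
  rw [kk.vol_ball, (pForm p hp).vol_ball]
  have hdet : ((pForm p hp).form PosDefHermForm.E0 PosDefHermForm.E0).re
      * ((pForm p hp).form PosDefHermForm.E1 PosDefHermForm.E1).re
      - normSq ((pForm p hp).form PosDefHermForm.E0 PosDefHermForm.E1) = 1/4 := by
    rw [pForm_A, pForm_B, pForm_C]
    simp only [map_zero]
    field_simp
    ring
  rw [hdet]
  refine mul_le_mul_left (ENNReal.ofReal_le_ofReal ?_) _
  have h14 := kk.det_ge hkk
  have : ((1:ℝ)/4)⁻¹ = 4 := by norm_num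
  rw [this]
  exact inv_le_flip' (by norm_num) (by linarith)

lemma ellP_ne (p q : ℝ) (hp0 : 0 < p) (hlt : p < q) : ellP p ≠ ellP q := by
  intro heq
  have hq0 : 0 < q := hp0.trans hlt
  set s0 : ℝ := p⁻¹^2 + q⁻¹^2 with hs0
  set z : Fin 2 → ℂ := ![((Real.sqrt s0 : ℝ) : ℂ), 0] with hzdef
  have hz0 : normSq (z 0) = s0 := by
    have : z 0 = ((Real.sqrt s0 : ℝ) : ℂ) := rfl
    rw [this, Complex.normSq_ofReal, Real.mul_self_sqrt (by positivity)]
  have hz1 : normSq (z 1) = 0 := by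
    have : z 1 = 0 := rfl
    rw [this, map_zero]
  have hp' : p^2/2 * s0 < 1 := by
    have e : p^2/2 * s0 = 1/2 + p^2/(2*q^2) := by
      rw [hs0]
      field_simp
    rw [e]
    have : p^2/(2*q^2) < 1/2 := by
      rw [div_lt_iff₀ (by positivity)]
      nlinarith
    linarith
  have hq' : 1 < q^2/2 * s0 := by
    have e : q^2/2 * s0 = q^2/(2*p^2) + 1/2 := by
      rw [hs0]
      field_simp
    rw [e]
    have : 1/2 < q^2/(2*p^2) := by
      rw [lt_div_iff₀ (by positivity)]
      nlinarith
    linarith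
  have hmem : z ∈ ellP p := by
    show p^2/2 * normSq (z 0) + p⁻¹^2/2 * normSq (z 1) < 1
    rw [hz0, hz1, mul_zero, add_zero]
    exact hp'
  rw [heq] at hmem
  have : q^2/2 * normSq (z 0) + q⁻¹^2/2 * normSq (z 1) < 1 := hmem
  rw [hz0, hz1, mul_zero, add_zero] at this
  linarith

lemma ellP_injOn : Set.InjOn ellP (Set.Ioo (1:ℝ) 2) := by
  intro p hp q hq heq
  by_contra hne
  rcases lt_or_gt_of_ne hne with h | h
  · exact ellP_ne p q (by linarith [hp.1]) h heq
  · exact ellP_ne q p (by linarith [hq.1]) h heq.symm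

/-- Proposition 4.3: `Ω` is a bounded pseudoconvex domain in
which each `E_p`, `1/2 < p < 2`, is a maximal hermitian ellipsoid; in
particular `Ω` admits infinitely many maximal ellipsoids. -/
theorem infinitely_many_maximal_ellipsoids :
    IsPseudoconvex OmegaXY ∧ IsBounded OmegaXY ∧ IsConnected OmegaXY ∧
    (∀ p : ℝ, 1/2 < p → p < 2 → ∃ h : PosDefHermForm 2, h.ball = ellP p ∧
      h.ball ⊆ OmegaXY ∧
      ∀ k : PosDefHermForm 2, k.ball ⊆ OmegaXY → volume k.ball ≤ volume h.ball) ∧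
    {E : Set (Fin 2 → ℂ) | ∃ h : PosDefHermForm 2, E = h.ball ∧ E ⊆ OmegaXY ∧
      ∀ k : PosDefHermForm 2, k.ball ⊆ OmegaXY →
        volume k.ball ≤ volume h.ball}.Infinite := by
  have part4 : ∀ p : ℝ, 1/2 < p → p < 2 → ∃ h : PosDefHermForm 2, h.ball = ellP p ∧
      h.ball ⊆ OmegaXY ∧
      ∀ k : PosDefHermForm 2, k.ball ⊆ OmegaXY → volume k.ball ≤ volume h.ball := by
    intro p hp1 hp2
    have hp : 0 < p := by linarith
    refine ⟨pForm p hp, pForm_ball p hp, ?_, ?_⟩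
    · rw [pForm_ball p hp]
      exact ellP_subset p hp1 hp2
    · intro kk hkk
      exact pForm_maximal p hp kk hkk
  refine ⟨⟨omega_open, uExh, uExh_contOn, uExh_psh, uExh_sublevel_compact⟩, omega_bounded,
    omega_connected, part4, ?_⟩
  have hsub : (ellP '' Set.Ioo (1:ℝ) 2) ⊆ {E : Set (Fin 2 → ℂ) |
      ∃ h : PosDefHermForm 2, E = h.ball ∧ E ⊆ OmegaXY ∧
        ∀ k : PosDefHermForm 2, k.ball ⊆ OmegaXY → volume k.ball ≤ volume h.ball} := by
    rintro E ⟨p, hp, rfl⟩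
    obtain ⟨h, hb, hss, hmax⟩ := part4 p (by linarith [hp.1]) hp.2
    exact ⟨h, hb.symm, hb ▸ hss, hmax⟩
  exact ((Set.Ioo_infinite (by norm_num)).image ellP_injOn).mono hsub

end
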